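/- Assume algebraMap R A is injective. Then the map sending p ∈ S_A to the pair (r, [p.coeff 1]), where r ∈ R is the unique element with algebraMap R A r = p.coeff 0 and [·] denotes the class in A ⧸ Submodule.span R {(1 : A)}, is a surjective R-algebra homomorphism from S_A to TrivSqZeroExt R (A ⧸ Submodule.span R {(1 : A)}) whose kernel is the ideal of S_A generated by the element X; consequently the quotient of S_A by the ideal generated by X is isomorphic as an R-algebra to TrivSqZeroExt R (A ⧸ Submodule.span R {(1 : A)}). -/

import Mathlib

/-- Let `A` be a commutative `R`-algebra with `algebraMap R A` injective, and
let `S_A ⊆ A[X]` be the subalgebra of polynomials whose constant coefficient lies in the image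
of `R`. The map sending `p ∈ S_A` to `(r, [p.coeff 1])`, where `r` is the unique element with
`algebraMap R A r = p.coeff 0` and `[·]` is the class in `A ⧸ R·1`, is a surjective `R`-algebra
homomorphism `S_A → TrivSqZeroExt R (A ⧸ R·1)` with kernel the ideal generated by `X`;
consequently `S_A ⧸ (X)` is `R`-algebra isomorphic to `TrivSqZeroExt R (A ⧸ R·1)`. -/
theorem stmt4 (R A : Type*) [CommRing R] [CommRing A] [Algebra R A]
    (hinj : Function.Injective (algebraMap R A))
    [Module Rᵐᵒᵖ (A ⧸ Submodule.span R {(1 : A)})]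
    [IsCentralScalar R (A ⧸ Submodule.span R {(1 : A)})] :
    ∀ S : Subalgebra R (Polynomial A),
      (S : Set (Polynomial A)) =
        {p : Polynomial A | p.coeff 0 ∈ (algebraMap R A).range} →
      ∀ x : S, (x : Polynomial A) = Polynomial.X →
        ∃ φ : S →ₐ[R] TrivSqZeroExt R (A ⧸ Submodule.span R {(1 : A)}),
          (∀ p : S,
            algebraMap R A (φ p).fst = (p : Polynomial A).coeff 0 ∧
            (φ p).snd =
              Submodule.Quotient.mk ((p : Polynomial A).coeff 1)) ∧
          Function.Surjective φ ∧
          RingHom.ker φ = Ideal.span {x} ∧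
          Nonempty ((S ⧸ Ideal.span {x}) ≃ₐ[R]
            TrivSqZeroExt R (A ⧸ Submodule.span R {(1 : A)})) := by
  classical
  intro S hS x hx
  have hmem : ∀ p : S, ∃ r : R, algebraMap R A r = (p : Polynomial A).coeff 0 := by
    intro p
    exact RingHom.mem_range.mp (hS.subset p.2)
  set c : S → R := fun p => (hmem p).choose with hcdef
  have hc : ∀ p : S, algebraMap R A (c p) = (p : Polynomial A).coeff 0 :=
    fun p => (hmem p).choose_spec
  have hcu : ∀ (p : S) (r : R), algebraMap R A r = (p : Polynomial A).coeff 0 → c p = r := by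
    intro p r h; apply hinj; rw [hc p, h]
  have hsmul : ∀ (r : R) (a : A), r • (Submodule.Quotient.mk a : A ⧸ Submodule.span R {(1 : A)})
      = Submodule.Quotient.mk (algebraMap R A r * a) := by
    intro r a
    rw [← Submodule.Quotient.mk_smul, Algebra.smul_def]
  have coeff1_mul : ∀ p q : Polynomial A,
      (p * q).coeff 1 = p.coeff 0 * q.coeff 1 + p.coeff 1 * q.coeff 0 := by
    intro p q
    rw [Polynomial.coeff_mul, Finset.Nat.sum_antidiagonal_eq_sum_range_succ_mk]
    simp [Finset.sum_range_succ]
  have hmk1 : ∀ a : A, a ∈ (algebraMap R A).range →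
      (Submodule.Quotient.mk a : A ⧸ Submodule.span R {(1 : A)}) = 0 := by
    rintro a ⟨r, rfl⟩
    rw [Submodule.Quotient.mk_eq_zero]
    exact Submodule.mem_span_singleton.mpr ⟨r, by rw [Algebra.smul_def, mul_one]⟩
  let φ : S →ₐ[R] TrivSqZeroExt R (A ⧸ Submodule.span R {(1 : A)}) :=
  { toFun := fun p => (c p, Submodule.Quotient.mk ((p : Polynomial A).coeff 1))
    map_one' := by
      refine TrivSqZeroExt.ext ?_ ?_
      · show c 1 = 1
        apply hcu
        simp
      · show (Submodule.Quotient.mk ((1 : Polynomial A).coeff 1) : _) = 0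
        rw [show ((1 : Polynomial A).coeff 1) = 0 by simp [Polynomial.coeff_one]]
        simp
    map_mul' := by
      intro p q
      refine TrivSqZeroExt.ext ?_ ?_
      · show c (p * q) = c p * c q
        apply hcu
        rw [map_mul, hc, hc, ← Polynomial.mul_coeff_zero]
        congr 1
      · show (Submodule.Quotient.mk (((p * q : S) : Polynomial A).coeff 1) : _) = _
        show _ = c p • Submodule.Quotient.mk ((q : Polynomial A).coeff 1)
          + MulOpposite.op (c q) • Submodule.Quotient.mk ((p : Polynomial A).coeff 1)
        rw [op_smul_eq_smul, hsmul, hsmul, hc, hc, ← Submodule.Quotient.mk_add,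
          MulMemClass.coe_mul, coeff1_mul]
        congr 1
        ring
    map_zero' := by
      refine TrivSqZeroExt.ext ?_ ?_
      · show c 0 = 0
        apply hcu; simp
      · show (Submodule.Quotient.mk ((0 : Polynomial A).coeff 1) : _) = 0
        simp
    map_add' := by
      intro p q
      refine TrivSqZeroExt.ext ?_ ?_
      · show c (p + q) = c p + c q
        apply hcu
        rw [map_add, hc, hc, ← Polynomial.coeff_add]
        congr 1
      · show (Submodule.Quotient.mk (((p + q : S) : Polynomial A).coeff 1) : _) = _
        push_cast
        rw [Polynomial.coeff_add, Submodule.Quotient.mk_add]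
        rfl
    commutes' := by
      intro r
      refine TrivSqZeroExt.ext ?_ ?_
      · show c (algebraMap R S r) = _
        rw [TrivSqZeroExt.algebraMap_eq_inl, TrivSqZeroExt.fst_inl]
        apply hcu
        show algebraMap R A r = ((algebraMap R (Polynomial A)) r).coeff 0
        simp [Polynomial.algebraMap_apply]
      · show (Submodule.Quotient.mk ((((algebraMap R S r : S) : Polynomial A)).coeff 1) : _) =
          (algebraMap R (TrivSqZeroExt R (A ⧸ Submodule.span R {(1 : A)})) r).snd
        rw [TrivSqZeroExt.algebraMap_eq_inl, TrivSqZeroExt.snd_inl]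
        show (Submodule.Quotient.mk (((algebraMap R (Polynomial A)) r).coeff 1) : _) = 0
        simp [Polynomial.algebraMap_apply] }
  have hspec : ∀ p : S, algebraMap R A (φ p).fst = (p : Polynomial A).coeff 0 ∧
      (φ p).snd = Submodule.Quotient.mk ((p : Polynomial A).coeff 1) := by
    intro p
    exact ⟨hc p, rfl⟩
  have hsurj : Function.Surjective φ := by
    rintro ⟨r, m⟩
    obtain ⟨a, rfl⟩ := Submodule.Quotient.mk_surjective _ m
    have hp : (Polynomial.C (algebraMap R A r) + Polynomial.C a * Polynomial.X) ∈ S := by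
      rw [← SetLike.mem_coe, hS]
      show (Polynomial.C (algebraMap R A r) + Polynomial.C a * Polynomial.X).coeff 0
        ∈ (algebraMap R A).range
      simp
    refine ⟨⟨_, hp⟩, ?_⟩
    refine TrivSqZeroExt.ext ?_ ?_
    · show c _ = r
      apply hcu
      simp
    · rw [(hspec _).2]
      show _ = Submodule.Quotient.mk a
      congr 1
      simp
  have hker : RingHom.ker φ = Ideal.span {x} := by
    ext p
    rw [RingHom.mem_ker, Ideal.mem_span_singleton']
    constructor
    · intro h
      have hc0 : (p : Polynomial A).coeff 0 = 0 := by
        rw [← (hspec p).1, h, TrivSqZeroExt.fst_zero, map_zero]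
      have hc1 : ((p : Polynomial A).coeff 1) ∈ (Submodule.span R {(1 : A)}) := by
        rw [← Submodule.Quotient.mk_eq_zero, ← (hspec p).2, h, TrivSqZeroExt.snd_zero]
      obtain ⟨r, hr⟩ := Submodule.mem_span_singleton.mp hc1
      have hdmem : (p : Polynomial A).divX ∈ S := by
        rw [← SetLike.mem_coe, hS]
        show ((p : Polynomial A).divX).coeff 0 ∈ (algebraMap R A).range
        rw [Polynomial.coeff_divX]
        exact ⟨r, by rw [← hr, Algebra.smul_def, mul_one]⟩
      refine ⟨⟨_, hdmem⟩, ?_⟩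
      apply Subtype.ext
      rw [MulMemClass.coe_mul, hx]
      conv_rhs => rw [← Polynomial.X_mul_divX_add (p : Polynomial A)]
      rw [hc0, map_zero, add_zero, mul_comm]
    · rintro ⟨s, rfl⟩
      have hx0 : ((s * x : S) : Polynomial A) = (s : Polynomial A) * Polynomial.X := by
        rw [MulMemClass.coe_mul, hx]
      refine TrivSqZeroExt.ext ?_ ?_
      · show c (s * x) = 0
        apply hcu
        rw [map_zero, hx0]
        simp
      · show (Submodule.Quotient.mk ((((s * x : S) : Polynomial A)).coeff 1) : _) = 0
        rw [hx0]
        apply hmk1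
        rw [Polynomial.coeff_mul_X]
        exact RingHom.mem_range.mp (hS.subset s.2)
  refine ⟨φ, hspec, hsurj, hker, ⟨?_⟩⟩
  exact hker ▸ Ideal.quotientKerAlgEquivOfSurjective hsurj
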